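/- Let A be a process whose program counter is inside the repeat loop of the quasi rendezvous protocol and let B be a neighbour of A. From any configuration, every execution eventually reaches a configuration in which either B allows A to write, or A has exited the repeat loop. -/

import Mathlib

/-!
An operational model of the quasi rendezvous protocol of Johnen, Lavallée, Lavault.

Each process `A` owns, for each neighbour `B_i`, a register `Write_{AB_i}` and two
one-bit registers `Control_{AB_i}` and `CheckControl_{AB_i}`; communication is under
read/write atomicity.
-/

structure Network where
  Proc : Type
  deg : Proc → ℕ
  deg_pos : ∀ p, 0 < deg p
  nbr : (p : Proc) → Fin (deg p) → Proc
  nbr_ne : ∀ p i, nbr p i ≠ p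
  nbr_inj : ∀ p, Function.Injective (nbr p)
  nbr_symm : ∀ p i, ∃ j, nbr (nbr p i) j = p

namespace QR

open Classical

/-- Program counter of a process with `n` neighbours running the quasi rendezvous
protocol.  `wr i k` : writing phase, neighbour `i`, sub-action `k`
(`k = 0`: `write(Write_{AB_i}, get_i)`, `k = 1`: `c_i ← read(Control_{AB_i})`,
`k = 2`: `write(Control_{AB_i}, (c_i+1) mod 2)`);
`lp i k` : repeat loop, neighbour `i`, sub-action `k`
(`k = 0`: `b_i ← read(Control_{B_iA})`, `k = 1`: `d_i ← read(CheckControl_{AB_i})`,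
then if `b_i ≠ d_i` continue with `k = 2`: `r_i ← read(Write_{B_iA})` and
`k = 3`: `write(CheckControl_{AB_i}, b_i)`, else jump to `k = 4`;
`k = 4`: `c_i ← read(Control_{AB_i})`, `k = 5`: `l_i ← read(CheckControl_{B_iA})`,
followed, after the last neighbour, by the (local) exit test `∀ i, c_i = l_i`). -/
inductive PC (n : ℕ) : Type
  | wr : Fin n → Fin 3 → PC n
  | lp : Fin n → Fin 6 → PC n

/-- An atomic action (read/write atomicity); `A B` names the owner and the direction
of the register, e.g. `readC A B` is a read of `Control_{AB}` and `writeCC A B b`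
writes the bit `b` into `CheckControl_{AB}`. -/
inductive Act (Proc Val : Type) : Type
  | readW : Proc → Proc → Act Proc Val
  | writeW : Proc → Proc → Val → Act Proc Val
  | readC : Proc → Proc → Act Proc Val
  | writeC : Proc → Proc → Bool → Act Proc Val
  | readCC : Proc → Proc → Act Proc Val
  | writeCC : Proc → Proc → Bool → Act Proc Val

/-- A configuration: register contents and local states (pc and local variables
`r_i`, `b_i`, `d_i`, `c_i`, `l_i`). -/
structure Config (Net : Network) (Val : Type) : Type where
  regW : Net.Proc → Net.Proc → Val
  regC : Net.Proc → Net.Proc → Bool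
  regCC : Net.Proc → Net.Proc → Bool
  pc : (p : Net.Proc) → PC (Net.deg p)
  rv : (p : Net.Proc) → Fin (Net.deg p) → Val
  bv : (p : Net.Proc) → Fin (Net.deg p) → Bool
  dv : (p : Net.Proc) → Fin (Net.deg p) → Bool
  cv : (p : Net.Proc) → Fin (Net.deg p) → Bool
  lv : (p : Net.Proc) → Fin (Net.deg p) → Bool

def finSucc? {n : ℕ} (i : Fin n) : Option (Fin n) :=
  if h : i.1 + 1 < n then some ⟨i.1 + 1, h⟩ else none

noncomputable def upd2 {Proc : Type} {β : Type} (f : Proc → Proc → β) (a b : Proc) (v : β) :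
    Proc → Proc → β :=
  fun x y => if x = a ∧ y = b then v else f x y

/-- One atomic step of process `p`, labelled by the action performed.  The value
written by `write(Write_{AB_i}, get_i)` is arbitrary (`get_i` is an arbitrary helper
function returning the next message). -/
inductive Step (Net : Network) (Val : Type) :
    Config Net Val → Net.Proc → Act Net.Proc Val → Config Net Val → Prop
  | writeW (c : Config Net Val) (p : Net.Proc) (i : Fin (Net.deg p)) (v : Val)
      (h : c.pc p = .wr i 0) :
      Step Net Val c p (.writeW p (Net.nbr p i) v)
        { c with
          regW := upd2 c.regW p (Net.nbr p i) v
          pc := Function.update c.pc p (PC.wr i 1) }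
  | readOwnC (c : Config Net Val) (p : Net.Proc) (i : Fin (Net.deg p))
      (h : c.pc p = .wr i 1) :
      Step Net Val c p (.readC p (Net.nbr p i))
        { c with
          cv := Function.update c.cv p (Function.update (c.cv p) i (c.regC p (Net.nbr p i)))
          pc := Function.update c.pc p (PC.wr i 2) }
  | writeOwnC (c : Config Net Val) (p : Net.Proc) (i : Fin (Net.deg p))
      (h : c.pc p = .wr i 2) :
      Step Net Val c p (.writeC p (Net.nbr p i) (!(c.cv p i)))
        { c with
          regC := upd2 c.regC p (Net.nbr p i) (!(c.cv p i))
          pc := Function.update c.pc p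
            (match finSucc? i with
             | some j => PC.wr j 0
             | none => PC.lp ⟨0, Net.deg_pos p⟩ 0) }
  | readNbrC (c : Config Net Val) (p : Net.Proc) (i : Fin (Net.deg p))
      (h : c.pc p = .lp i 0) :
      Step Net Val c p (.readC (Net.nbr p i) p)
        { c with
          bv := Function.update c.bv p (Function.update (c.bv p) i (c.regC (Net.nbr p i) p))
          pc := Function.update c.pc p (PC.lp i 1) }
  | readOwnCC (c : Config Net Val) (p : Net.Proc) (i : Fin (Net.deg p))
      (h : c.pc p = .lp i 1) :
      Step Net Val c p (.readCC p (Net.nbr p i))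
        { c with
          dv := Function.update c.dv p
            (Function.update (c.dv p) i (c.regCC p (Net.nbr p i)))
          pc := Function.update c.pc p
            (if c.bv p i ≠ c.regCC p (Net.nbr p i) then PC.lp i 2 else PC.lp i 4) }
  | readNbrW (c : Config Net Val) (p : Net.Proc) (i : Fin (Net.deg p))
      (h : c.pc p = .lp i 2) :
      Step Net Val c p (.readW (Net.nbr p i) p)
        { c with
          rv := Function.update c.rv p (Function.update (c.rv p) i (c.regW (Net.nbr p i) p))
          pc := Function.update c.pc p (PC.lp i 3) }
  | writeOwnCC (c : Config Net Val) (p : Net.Proc) (i : Fin (Net.deg p))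
      (h : c.pc p = .lp i 3) :
      Step Net Val c p (.writeCC p (Net.nbr p i) (c.bv p i))
        { c with
          regCC := upd2 c.regCC p (Net.nbr p i) (c.bv p i)
          pc := Function.update c.pc p (PC.lp i 4) }
  | readOwnC' (c : Config Net Val) (p : Net.Proc) (i : Fin (Net.deg p))
      (h : c.pc p = .lp i 4) :
      Step Net Val c p (.readC p (Net.nbr p i))
        { c with
          cv := Function.update c.cv p (Function.update (c.cv p) i (c.regC p (Net.nbr p i)))
          pc := Function.update c.pc p (PC.lp i 5) }
  | readNbrCC (c : Config Net Val) (p : Net.Proc) (i : Fin (Net.deg p))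
      (h : c.pc p = .lp i 5) :
      Step Net Val c p (.readCC (Net.nbr p i) p)
        { c with
          lv := Function.update c.lv p (Function.update (c.lv p) i (c.regCC (Net.nbr p i) p))
          pc := Function.update c.pc p
            (match finSucc? i with
             | some j => PC.lp j 0
             | none =>
               if ∀ j, c.cv p j = Function.update (c.lv p) i (c.regCC (Net.nbr p i) p) j
               then PC.wr ⟨0, Net.deg_pos p⟩ 0
               else PC.lp ⟨0, Net.deg_pos p⟩ 0) }

/-- An execution: an infinite sequence of configurations, starting from an arbitrary
configuration, where at instant `t` the scheduled process performs one atomic action. -/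
structure Exec (Net : Network) (Val : Type) : Type where
  cfg : ℕ → Config Net Val
  sched : ℕ → Net.Proc
  act : ℕ → Act Net.Proc Val
  step : ∀ t, Step Net Val (cfg t) (sched t) (act t) (cfg (t + 1))

def Enabled {Net : Network} {Val : Type} (c : Config Net Val) (p : Net.Proc) : Prop :=
  ∃ a c', Step Net Val c p a c'

/-- Fair scheduler: any process that can continuously perform an action eventually
performs one. -/
def Exec.Fair {Net : Network} {Val : Type} (e : Exec Net Val) : Prop :=
  ∀ p t, (∀ u, t ≤ u → Enabled (e.cfg u) p) → ∃ u, t ≤ u ∧ e.sched u = p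

/-- The program counter of `p` is inside the repeat loop. -/
def InLoop {Net : Network} {Val : Type} (c : Config Net Val) (p : Net.Proc) : Prop :=
  ∃ i k, c.pc p = PC.lp i k

/-- In the quasi rendezvous protocol, `B` allows `A` to write iff
`CheckControl_{BA} = Control_{AB}`. -/
def Allows {Net : Network} {Val : Type} (c : Config Net Val) (B A : Net.Proc) : Prop :=
  c.regCC B A = c.regC A B

/-- `B` is a neighbour of `A`. -/
def Neighbour (Net : Network) (A B : Net.Proc) : Prop := ∃ i, Net.nbr A i = B

/-- At instant `t`, process `A` writes (some value) into its register `Write_{AB}`. -/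
def WritesW {Net : Network} {Val : Type} (e : Exec Net Val) (A B : Net.Proc) (t : ℕ) : Prop :=
  e.sched t = A ∧ ∃ v, e.act t = Act.writeW A B v

/-- At instant `t`, process `B` reads from the register `Write_{AB}` of its neighbour `A`. -/
def ReadsW {Net : Network} {Val : Type} (e : Exec Net Val) (A B : Net.Proc) (t : ℕ) : Prop :=
  e.sched t = B ∧ e.act t = Act.readW A B

/-- Process `P` has executed (at least) its first three atomic actions before
instant `t`. -/
def DidThree {Net : Network} {Val : Type} (e : Exec Net Val) (P : Net.Proc) (t : ℕ) : Prop :=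
  ∃ u1 u2 u3, u1 < u2 ∧ u2 < u3 ∧ u3 < t ∧
    e.sched u1 = P ∧ e.sched u2 = P ∧ e.sched u3 = P

/-- `A` performs a full (complete) writing of `Write_{AB}` at instants
`t1 < t2 < t3` (with no other action of `A` in between): the sequence
`write(Write_{AB}, get)`; `c ← read(Control_{AB})`;
`write(Control_{AB}, (c+1) mod 2)`. -/
def FullWriting {Net : Network} {Val : Type} (e : Exec Net Val) (A B : Net.Proc)
    (t1 t2 t3 : ℕ) : Prop :=
  t1 < t2 ∧ t2 < t3 ∧
  e.sched t1 = A ∧ e.sched t2 = A ∧ e.sched t3 = A ∧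
  (∃ v, e.act t1 = Act.writeW A B v) ∧
  e.act t2 = Act.readC A B ∧
  e.act t3 = Act.writeC A B (!(e.cfg t2).regC A B) ∧
  (∀ u, t1 < u → u < t3 → u ≠ t2 → e.sched u ≠ A)

end QR

namespace QR

open Classical

variable {Net : Network} {Val : Type}

/-- Position of a program counter along the canonical execution order. -/
def pos {n : ℕ} : PC n → ℕ
  | .lp i k => 6 * i.1 + k.1
  | .wr i k => 6 * n + 3 * i.1 + k.1

/-- Countdown (measure) to the program point `lp J 0`. -/
def meas (n J : ℕ) (p : PC n) : ℕ :=
  if pos p ≤ 6 * J then 6 * J - pos p else 6 * J + 9 * n - pos p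

lemma enabled_all (c : Config Net Val) (p : Net.Proc) : Enabled c p := by
  rcases h : c.pc p with ⟨i, k⟩ | ⟨i, k⟩
  · fin_cases k
    · exact ⟨_, _, Step.writeW c p i (c.rv p i) h⟩
    · exact ⟨_, _, Step.readOwnC c p i h⟩
    · exact ⟨_, _, Step.writeOwnC c p i h⟩
  · fin_cases k
    · exact ⟨_, _, Step.readNbrC c p i h⟩
    · exact ⟨_, _, Step.readOwnCC c p i h⟩
    · exact ⟨_, _, Step.readNbrW c p i h⟩
    · exact ⟨_, _, Step.writeOwnCC c p i h⟩
    · exact ⟨_, _, Step.readOwnC' c p i h⟩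
    · exact ⟨_, _, Step.readNbrCC c p i h⟩

lemma pc_frame {c c' : Config Net Val} {p q : Net.Proc} {a}
    (hst : Step Net Val c p a c') (h : q ≠ p) : c'.pc q = c.pc q := by
  cases hst <;> simp [Function.update_of_ne h]

lemma bv_frame {c c' : Config Net Val} {p q : Net.Proc} {a}
    (hst : Step Net Val c p a c') (h : q ≠ p) : c'.bv q = c.bv q := by
  cases hst <;> simp [Function.update_of_ne h]

lemma regC_frame {c c' : Config Net Val} {p : Net.Proc} {a}
    (hst : Step Net Val c p a c') (A B : Net.Proc)
    (hA : InLoop c A) : c'.regC A B = c.regC A B := by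
  cases hst with
  | writeOwnC i h =>
      simp only [upd2]
      split
      · next hc =>
          exfalso
          obtain ⟨hc1, _⟩ := hc
          subst hc1
          obtain ⟨j, k, hl⟩ := hA
          rw [h] at hl
          cases hl
      · rfl
  | _ => rfl

lemma step_meas_decr {c c' : Config Net Val} {B : Net.Proc} {a}
    (hst : Step Net Val c B a c') (J : Fin (Net.deg B))
    (hne : c.pc B ≠ .lp J 0) :
    meas (Net.deg B) J.1 (c'.pc B) < meas (Net.deg B) J.1 (c.pc B) := by
  have hJ : J.1 < Net.deg B := J.isLt
  cases hst with
  | writeW i v h =>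
      have hi := i.isLt
      rw [h]; simp only [Function.update_self, meas, pos]
      grind
  | readOwnC i h =>
      have hi := i.isLt
      rw [h]; simp only [Function.update_self, meas, pos]
      grind
  | writeOwnC i h =>
      have hi := i.isLt
      rw [h]; simp only [Function.update_self]
      rcases Nat.lt_or_ge (i.1 + 1) (Net.deg B) with hlt | hge
      · rw [show finSucc? i = some ⟨i.1 + 1, hlt⟩ from dif_pos hlt]
        simp only [meas, pos]; grind
      · rw [show finSucc? i = none from dif_neg (by omega)]
        simp only [meas, pos]; grind
  | readNbrC i h =>
      have hi := i.isLt
      have hiJ : i.1 ≠ J.1 := by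
        intro hv
        exact hne (h.trans (by rw [Fin.ext hv]))
      rw [h]; simp only [Function.update_self, meas, pos]
      grind
  | readOwnCC i h =>
      have hi := i.isLt
      rw [h]; simp only [Function.update_self]
      split_ifs <;> simp only [meas, pos] <;> grind
  | readNbrW i h =>
      have hi := i.isLt
      rw [h]; simp only [Function.update_self, meas, pos]
      grind
  | writeOwnCC i h =>
      have hi := i.isLt
      rw [h]; simp only [Function.update_self, meas, pos]
      grind
  | readOwnC' i h =>
      have hi := i.isLt
      rw [h]; simp only [Function.update_self, meas, pos]
      grind
  | readNbrCC i h =>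
      have hi := i.isLt
      rw [h]; simp only [Function.update_self]
      rcases Nat.lt_or_ge (i.1 + 1) (Net.deg B) with hlt | hge
      · rw [show finSucc? i = some ⟨i.1 + 1, hlt⟩ from dif_pos hlt]
        simp only [meas, pos]; grind
      · rw [show finSucc? i = none from dif_neg (by omega)]
        split_ifs <;> simp only [meas, pos] <;> grind

lemma nextB (e : Exec Net Val) (hfair : e.Fair) (B : Net.Proc) (s : ℕ) :
    ∃ u, s ≤ u ∧ e.sched u = B ∧ ∀ v, s ≤ v → v < u → e.sched v ≠ B := by
  obtain ⟨u, hu, hs⟩ := hfair B s (fun v _ => enabled_all _ _)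
  have hP : ∃ w, s ≤ w ∧ e.sched w = B := ⟨u, hu, hs⟩
  refine ⟨Nat.find hP, (Nat.find_spec hP).1, (Nat.find_spec hP).2, ?_⟩
  intro v hv1 hv2 hvB
  exact Nat.find_min hP hv2 ⟨hv1, hvB⟩

lemma quiet_const (e : Exec Net Val) (B : Net.Proc) (s : ℕ) :
    ∀ u, s ≤ u → (∀ v, s ≤ v → v < u → e.sched v ≠ B) →
      (e.cfg u).pc B = (e.cfg s).pc B ∧ (e.cfg u).bv B = (e.cfg s).bv B := by
  intro u
  induction u with
  | zero =>
      intro hs _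
      have : s = 0 := Nat.le_zero.mp hs
      subst this; exact ⟨rfl, rfl⟩
  | succ u ih =>
      intro hs hq
      rcases Nat.lt_or_ge s (u + 1) with hlt | hge
      · have hsu : s ≤ u := by omega
        obtain ⟨h1, h2⟩ := ih hsu (fun v a b => hq v a (by omega))
        have hne : B ≠ e.sched u := fun hh => hq u hsu (by omega) hh.symm
        exact ⟨(pc_frame (e.step u) hne).trans h1, (bv_frame (e.step u) hne).trans h2⟩
      · have : s = u + 1 := by omega
        subst this; exact ⟨rfl, rfl⟩

lemma reach (e : Exec Net Val) (hfair : e.Fair) (B : Net.Proc) (J : Fin (Net.deg B))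
    (s : ℕ) : ∃ u, s ≤ u ∧ e.sched u = B ∧ (e.cfg u).pc B = .lp J 0 := by
  have key : ∀ m s, meas (Net.deg B) J.1 ((e.cfg s).pc B) ≤ m →
      ∃ u, s ≤ u ∧ e.sched u = B ∧ (e.cfg u).pc B = .lp J 0 := by
    intro m
    induction m using Nat.strong_induction_on with
    | _ m ih =>
      intro s hm
      obtain ⟨u, hsu, hB, hq⟩ := nextB e hfair B s
      have hpc : (e.cfg u).pc B = (e.cfg s).pc B := (quiet_const e B s u hsu hq).1
      by_cases htgt : (e.cfg u).pc B = .lp J 0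
      · exact ⟨u, hsu, hB, htgt⟩
      · have hst := e.step u
        rw [hB] at hst
        have hdec := step_meas_decr hst J htgt
        rw [hpc] at hdec
        have hlt : meas (Net.deg B) J.1 ((e.cfg (u + 1)).pc B) < m := lt_of_lt_of_le hdec hm
        obtain ⟨u', h1, h2, h3⟩ := ih _ hlt (u + 1) le_rfl
        exact ⟨u', by omega, h2, h3⟩
  exact key _ s le_rfl

lemma step_inv_lp0 {c c' : Config Net Val} {B : Net.Proc} {a} {J : Fin (Net.deg B)}
    (hst : Step Net Val c B a c') (hpc : c.pc B = .lp J 0) :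
    c'.pc B = .lp J 1 ∧ c'.bv B J = c.regC (Net.nbr B J) B := by
  cases hst with
  | writeW i v h => exact absurd (hpc.symm.trans h) (by simp)
  | readOwnC i h => exact absurd (hpc.symm.trans h) (by simp)
  | writeOwnC i h => exact absurd (hpc.symm.trans h) (by simp)
  | readNbrC i h =>
      have hJ : J = i := by
        have h2 := hpc.symm.trans h
        injection h2 with h3 h4
      subst hJ
      exact ⟨by simp, by simp⟩
  | readOwnCC i h =>
      have h2 := hpc.symm.trans h
      injection h2 with h3 h4
      exact absurd h4 (by decide)
  | readNbrW i h =>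
      have h2 := hpc.symm.trans h
      injection h2 with h3 h4
      exact absurd h4 (by decide)
  | writeOwnCC i h =>
      have h2 := hpc.symm.trans h
      injection h2 with h3 h4
      exact absurd h4 (by decide)
  | readOwnC' i h =>
      have h2 := hpc.symm.trans h
      injection h2 with h3 h4
      exact absurd h4 (by decide)
  | readNbrCC i h =>
      have h2 := hpc.symm.trans h
      injection h2 with h3 h4
      exact absurd h4 (by decide)

lemma step_inv_lp1 {c c' : Config Net Val} {B : Net.Proc} {a} {J : Fin (Net.deg B)}
    (hst : Step Net Val c B a c') (hpc : c.pc B = .lp J 1) :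
    c'.bv = c.bv ∧ c'.regCC = c.regCC ∧
    ((c.bv B J = c.regCC B (Net.nbr B J) ∧ c'.pc B = .lp J 4) ∨
     (c.bv B J ≠ c.regCC B (Net.nbr B J) ∧ c'.pc B = .lp J 2)) := by
  cases hst with
  | writeW i v h => exact absurd (hpc.symm.trans h) (by simp)
  | readOwnC i h => exact absurd (hpc.symm.trans h) (by simp)
  | writeOwnC i h => exact absurd (hpc.symm.trans h) (by simp)
  | readNbrC i h =>
      have h2 := hpc.symm.trans h
      injection h2 with h3 h4
      exact absurd h4 (by decide)
  | readOwnCC i h =>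
      have hJ : J = i := by
        have h2 := hpc.symm.trans h
        injection h2 with h3 h4
      subst hJ
      refine ⟨rfl, rfl, ?_⟩
      by_cases hbd : c.bv B J = c.regCC B (Net.nbr B J)
      · left
        refine ⟨hbd, ?_⟩
        simp only [Function.update_self]
        rw [if_neg (by simpa using hbd)]
      · right
        refine ⟨hbd, ?_⟩
        simp only [Function.update_self]
        rw [if_pos (by simpa using hbd)]
  | readNbrW i h =>
      have h2 := hpc.symm.trans h
      injection h2 with h3 h4
      exact absurd h4 (by decide)
  | writeOwnCC i h =>
      have h2 := hpc.symm.trans h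
      injection h2 with h3 h4
      exact absurd h4 (by decide)
  | readOwnC' i h =>
      have h2 := hpc.symm.trans h
      injection h2 with h3 h4
      exact absurd h4 (by decide)
  | readNbrCC i h =>
      have h2 := hpc.symm.trans h
      injection h2 with h3 h4
      exact absurd h4 (by decide)

lemma step_inv_lp2 {c c' : Config Net Val} {B : Net.Proc} {a} {J : Fin (Net.deg B)}
    (hst : Step Net Val c B a c') (hpc : c.pc B = .lp J 2) :
    c'.pc B = .lp J 3 ∧ c'.bv = c.bv ∧ c'.regCC = c.regCC := by
  cases hst with
  | writeW i v h => exact absurd (hpc.symm.trans h) (by simp)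
  | readOwnC i h => exact absurd (hpc.symm.trans h) (by simp)
  | writeOwnC i h => exact absurd (hpc.symm.trans h) (by simp)
  | readNbrC i h =>
      have h2 := hpc.symm.trans h
      injection h2 with h3 h4
      exact absurd h4 (by decide)
  | readOwnCC i h =>
      have h2 := hpc.symm.trans h
      injection h2 with h3 h4
      exact absurd h4 (by decide)
  | readNbrW i h =>
      have hJ : J = i := by
        have h2 := hpc.symm.trans h
        injection h2 with h3 h4
      subst hJ
      exact ⟨by simp, rfl, rfl⟩
  | writeOwnCC i h =>
      have h2 := hpc.symm.trans h
      injection h2 with h3 h4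
      exact absurd h4 (by decide)
  | readOwnC' i h =>
      have h2 := hpc.symm.trans h
      injection h2 with h3 h4
      exact absurd h4 (by decide)
  | readNbrCC i h =>
      have h2 := hpc.symm.trans h
      injection h2 with h3 h4
      exact absurd h4 (by decide)

lemma step_inv_lp3 {c c' : Config Net Val} {B : Net.Proc} {a} {J : Fin (Net.deg B)}
    (hst : Step Net Val c B a c') (hpc : c.pc B = .lp J 3) :
    c'.regCC B (Net.nbr B J) = c.bv B J := by
  cases hst with
  | writeW i v h => exact absurd (hpc.symm.trans h) (by simp)
  | readOwnC i h => exact absurd (hpc.symm.trans h) (by simp)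
  | writeOwnC i h => exact absurd (hpc.symm.trans h) (by simp)
  | readNbrC i h =>
      have h2 := hpc.symm.trans h
      injection h2 with h3 h4
      exact absurd h4 (by decide)
  | readOwnCC i h =>
      have h2 := hpc.symm.trans h
      injection h2 with h3 h4
      exact absurd h4 (by decide)
  | readNbrW i h =>
      have h2 := hpc.symm.trans h
      injection h2 with h3 h4
      exact absurd h4 (by decide)
  | writeOwnCC i h =>
      have hJ : J = i := by
        have h2 := hpc.symm.trans h
        injection h2 with h3 h4
      subst hJ
      simp [upd2]
  | readOwnC' i h =>
      have h2 := hpc.symm.trans h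
      injection h2 with h3 h4
      exact absurd h4 (by decide)
  | readNbrCC i h =>
      have h2 := hpc.symm.trans h
      injection h2 with h3 h4
      exact absurd h4 (by decide)

end QR

open QR in
/-- Let `A` be a process whose program counter is inside the repeat
loop of the quasi rendezvous protocol and let `B` be a neighbour of `A`.  From any
configuration, every (fair) execution eventually reaches a configuration in which
either `B` allows `A` to write (`CheckControl_{BA} = Control_{AB}`), or `A` has
exited the repeat loop. -/
theorem quasi_rendezvous_eventually_allowed_or_exit (Net : Network) (Val : Type)
    (e : Exec Net Val) (hfair : e.Fair) (A B : Net.Proc) (hAB : Neighbour Net A B)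
    (t : ℕ) (hloop : InLoop (e.cfg t) A) :
    ∃ u, t ≤ u ∧ (Allows (e.cfg u) B A ∨ ¬ InLoop (e.cfg u) A) := by
  by_contra hcon
  push_neg at hcon
  have hInLoop : ∀ u, t ≤ u → InLoop (e.cfg u) A := fun u hu => (hcon u hu).2
  have hNAllows : ∀ u, t ≤ u → ¬ Allows (e.cfg u) B A := fun u hu => (hcon u hu).1
  obtain ⟨i0, hi0⟩ := hAB
  subst hi0
  set B := Net.nbr A i0 with hBdef
  obtain ⟨j0, hj0⟩ := Net.nbr_symm A i0
  -- regC A B is constant from time t on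
  have hconst : ∀ u, t ≤ u → (e.cfg u).regC A B = (e.cfg t).regC A B := by
    intro u
    induction u with
    | zero =>
        intro hu
        have : t = 0 := by omega
        subst this; rfl
    | succ u ih =>
        intro hu
        rcases Nat.lt_or_ge t (u + 1) with hlt | hge
        · have htu : t ≤ u := by omega
          rw [regC_frame (e.step u) A B (hInLoop u htu)]
          exact ih htu
        · have : t = u + 1 := by omega
          subst this; rfl
  -- B eventually reaches lp j0 0 and reads Control_{AB}
  obtain ⟨u1, htu1, hB1, hpc1⟩ := reach e hfair B j0 t
  have hst1 := e.step u1
  rw [hB1] at hst1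
  obtain ⟨hpc1', hbv1⟩ := step_inv_lp0 hst1 hpc1
  rw [hj0, hconst u1 htu1] at hbv1
  -- next B-step : readOwnCC
  obtain ⟨u2, h12, hB2, hq2⟩ := nextB e hfair B (u1 + 1)
  obtain ⟨hpc2eq, hbv2eq⟩ := quiet_const e B (u1 + 1) u2 h12 hq2
  have hpc2 : (e.cfg u2).pc B = .lp j0 1 := hpc2eq.trans hpc1'
  have hbv2 : (e.cfg u2).bv B j0 = (e.cfg t).regC A B :=
    (congrFun hbv2eq j0).trans hbv1
  have hst2 := e.step u2
  rw [hB2] at hst2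
  obtain ⟨hbv2', hcc2', hbr⟩ := step_inv_lp1 hst2 hpc2
  have ht2 : t ≤ u2 := by omega
  rcases hbr with ⟨heq, _⟩ | ⟨hneq, hpc3'⟩
  · -- CheckControl_{BA} already equals Control_{AB} : Allows holds at u2
    refine hNAllows u2 ht2 ?_
    show (e.cfg u2).regCC B A = (e.cfg u2).regC A B
    have e1 : (e.cfg u2).regCC B A = (e.cfg u2).regCC B (Net.nbr B j0) := by rw [hj0]
    rw [e1, ← heq, hbv2, hconst u2 ht2]
  · -- B proceeds to read Write and then writes CheckControl_{BA}
    obtain ⟨u3, h23, hB3, hq3⟩ := nextB e hfair B (u2 + 1)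
    obtain ⟨hpc3eq, hbv3eq⟩ := quiet_const e B (u2 + 1) u3 h23 hq3
    have hpc3 : (e.cfg u3).pc B = .lp j0 2 := hpc3eq.trans hpc3'
    have hbv3 : (e.cfg u3).bv B j0 = (e.cfg t).regC A B := by
      rw [congrFun hbv3eq j0, congrFun (congrFun hbv2' B) j0, hbv2]
    have hst3 := e.step u3
    rw [hB3] at hst3
    obtain ⟨hpc4', hbv3', _⟩ := step_inv_lp2 hst3 hpc3
    obtain ⟨u4, h34, hB4, hq4⟩ := nextB e hfair B (u3 + 1)
    obtain ⟨hpc4eq, hbv4eq⟩ := quiet_const e B (u3 + 1) u4 h34 hq4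
    have hpc4 : (e.cfg u4).pc B = .lp j0 3 := hpc4eq.trans hpc4'
    have hbv4 : (e.cfg u4).bv B j0 = (e.cfg t).regC A B := by
      rw [congrFun hbv4eq j0, congrFun (congrFun hbv3' B) j0, hbv3]
    have hst4 := e.step u4
    rw [hB4] at hst4
    have hcc := step_inv_lp3 hst4 hpc4
    have ht4 : t ≤ u4 + 1 := by omega
    refine hNAllows (u4 + 1) ht4 ?_
    show (e.cfg (u4 + 1)).regCC B A = (e.cfg (u4 + 1)).regC A B
    have e1 : (e.cfg (u4 + 1)).regCC B A = (e.cfg (u4 + 1)).regCC B (Net.nbr B j0) := by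
      rw [hj0]
    rw [e1, hcc, hbv4, hconst (u4 + 1) ht4]
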